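/- In the quantized enveloping algebra U_q(sl_2) with generators E, F, K, K^{-1}, the elements X = E, Z = q^{-2}EF - FE, Y = KF span a 3-dimensional subspace that is closed under the left adjoint action ad_x(y) = Σ x_{(1)} y S(x_{(2)}). -/

import Mathlib

noncomputable section

open FreeAlgebra

/-- The defining relations of the quantised enveloping algebra U_q(sl_2):
generators E = ι 0, F = ι 1, K = ι 2, K⁻¹ = ι 3. -/
inductive UqRel (q : ℂ) : FreeAlgebra ℂ (Fin 4) → FreeAlgebra ℂ (Fin 4) → Prop
  | rKE : UqRel q (ι ℂ 2 * ι ℂ 0) ((q ^ 2 : ℂ) • (ι ℂ 0 * ι ℂ 2))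
  | rKF : UqRel q (ι ℂ 2 * ι ℂ 1) (((q ^ 2)⁻¹ : ℂ) • (ι ℂ 1 * ι ℂ 2))
  | rKK' : UqRel q (ι ℂ 2 * ι ℂ 3) 1
  | rK'K : UqRel q (ι ℂ 3 * ι ℂ 2) 1
  | rEF : UqRel q (ι ℂ 0 * ι ℂ 1 - ι ℂ 1 * ι ℂ 0)
      (((q - q⁻¹)⁻¹ : ℂ) • (ι ℂ 2 - ι ℂ 3))

/-- The quantised enveloping algebra U_q(sl_2). -/
abbrev Uq (q : ℂ) := RingQuot (UqRel q)

def uE (q : ℂ) : Uq q := RingQuot.mkAlgHom ℂ (UqRel q) (ι ℂ 0)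
def uF (q : ℂ) : Uq q := RingQuot.mkAlgHom ℂ (UqRel q) (ι ℂ 1)
def uK (q : ℂ) : Uq q := RingQuot.mkAlgHom ℂ (UqRel q) (ι ℂ 2)
def uKi (q : ℂ) : Uq q := RingQuot.mkAlgHom ℂ (UqRel q) (ι ℂ 3)

/-- X = E. -/
def uX (q : ℂ) : Uq q := uE q
/-- Z = q⁻²EF - FE. -/
def uZ (q : ℂ) : Uq q := (q ^ 2)⁻¹ • (uE q * uF q) - uF q * uE q
/-- Y = KF. -/
def uY (q : ℂ) : Uq q := uK q * uF q

/-- The adjoint action of the generator E: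
ad_E(y) = Σ E_{(1)} y S(E_{(2)}) = E y K⁻¹ - y E K⁻¹
(using ΔE = E⊗K + 1⊗E, S(K) = K⁻¹, S(E) = -EK⁻¹). -/
def adE (q : ℂ) (y : Uq q) : Uq q := uE q * y * uKi q - y * (uE q * uKi q)

/-- The adjoint action of the generator F:
ad_F(y) = F y - K⁻¹ y K F (using ΔF = F⊗1 + K⁻¹⊗F, S(F) = -KF). -/
def adF (q : ℂ) (y : Uq q) : Uq q := uF q * y - uKi q * y * (uK q * uF q)

/-- The adjoint action of the generator K: ad_K(y) = K y K⁻¹. -/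
def adK (q : ℂ) (y : Uq q) : Uq q := uK q * y * uKi q

/-- The adjoint action of the generator K⁻¹: ad_{K⁻¹}(y) = K⁻¹ y K. -/
def adKi (q : ℂ) (y : Uq q) : Uq q := uKi q * y * uK q

variable {q : ℂ}

lemma hKE : uK q * uE q = (q ^ 2) • (uE q * uK q) := by
  simpa [uK, uE, map_mul, map_smul] using RingQuot.mkAlgHom_rel ℂ (UqRel.rKE (q := q))

lemma hKF : uK q * uF q = ((q ^ 2)⁻¹) • (uF q * uK q) := by
  simpa [uK, uF, map_mul, map_smul] using RingQuot.mkAlgHom_rel ℂ (UqRel.rKF (q := q))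

lemma hKKi : uK q * uKi q = 1 := by
  simpa [uK, uKi, map_mul] using RingQuot.mkAlgHom_rel ℂ (UqRel.rKK' (q := q))

lemma hKiK : uKi q * uK q = 1 := by
  simpa [uK, uKi, map_mul] using RingQuot.mkAlgHom_rel ℂ (UqRel.rK'K (q := q))

lemma hEF : uE q * uF q - uF q * uE q = ((q - q⁻¹)⁻¹) • (uK q - uKi q) := by
  simpa [uE, uF, uK, uKi, map_mul, map_smul, map_sub] using
    RingQuot.mkAlgHom_rel ℂ (UqRel.rEF (q := q))

lemma hq2 (hq : q ≠ 0) : (q ^ 2 : ℂ) ≠ 0 := pow_ne_zero _ hq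

-- push-right commutation lemmas
lemma cKE : ∀ x : Uq q, uK q * (uE q * x) = (q ^ 2) • (uE q * (uK q * x)) := by
  intro x
  rw [← mul_assoc, hKE, smul_mul_assoc, mul_assoc]

lemma cKF : ∀ x : Uq q, uK q * (uF q * x) = ((q ^ 2)⁻¹) • (uF q * (uK q * x)) := by
  intro x
  rw [← mul_assoc, hKF, smul_mul_assoc, mul_assoc]

lemma hEK (hq : q ≠ 0) : uE q * uK q = ((q ^ 2)⁻¹) • (uK q * uE q) := by
  rw [hKE, smul_smul, inv_mul_cancel₀ (hq2 hq), one_smul]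

lemma hFK (hq : q ≠ 0) : uF q * uK q = (q ^ 2) • (uK q * uF q) := by
  rw [hKF, smul_smul, mul_inv_cancel₀ (hq2 hq), one_smul]

lemma hKiE (hq : q ≠ 0) : uKi q * uE q = ((q ^ 2)⁻¹) • (uE q * uKi q) := by
  have h1 : uKi q * (uK q * uE q) * uKi q = uE q * uKi q := by
    rw [← mul_assoc, hKiK, one_mul]
  rw [hKE] at h1
  simp only [mul_smul_comm, smul_mul_assoc, mul_assoc, hKKi, mul_one] at h1
  rw [← h1, smul_smul, inv_mul_cancel₀ (hq2 hq), one_smul]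

lemma hKiF (hq : q ≠ 0) : uKi q * uF q = (q ^ 2) • (uF q * uKi q) := by
  have h1 : uKi q * (uK q * uF q) * uKi q = uF q * uKi q := by
    rw [← mul_assoc, hKiK, one_mul]
  rw [hKF] at h1
  simp only [mul_smul_comm, smul_mul_assoc, mul_assoc, hKKi, mul_one] at h1
  rw [← h1, smul_smul, mul_inv_cancel₀ (hq2 hq), one_smul]

lemma cKiE (hq : q ≠ 0) : ∀ x : Uq q, uKi q * (uE q * x) = ((q ^ 2)⁻¹) • (uE q * (uKi q * x)) := by
  intro x; rw [← mul_assoc, hKiE hq, smul_mul_assoc, mul_assoc]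

lemma cKiF (hq : q ≠ 0) : ∀ x : Uq q, uKi q * (uF q * x) = (q ^ 2) • (uF q * (uKi q * x)) := by
  intro x; rw [← mul_assoc, hKiF hq, smul_mul_assoc, mul_assoc]

lemma cKKi : ∀ x : Uq q, uK q * (uKi q * x) = x := by
  intro x; rw [← mul_assoc, hKKi, one_mul]

lemma cKiK : ∀ x : Uq q, uKi q * (uK q * x) = x := by
  intro x; rw [← mul_assoc, hKiK, one_mul]

lemma hFE : uF q * uE q = uE q * uF q - ((q - q⁻¹)⁻¹) • uK q + ((q - q⁻¹)⁻¹) • uKi q := by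
  have := hEF (q := q)
  rw [smul_sub] at this
  linear_combination (norm := module) -this

lemma cFE : ∀ x : Uq q, uF q * (uE q * x) =
    uE q * (uF q * x) - ((q - q⁻¹)⁻¹) • (uK q * x) + ((q - q⁻¹)⁻¹) • (uKi q * x) := by
  intro x
  rw [← mul_assoc, hFE, add_mul, sub_mul, smul_mul_assoc, smul_mul_assoc, mul_assoc]




set_option maxHeartbeats 1000000 in
lemma adE_X : adE q (uX q) = 0 := by
  rw [adE, uX, mul_assoc, sub_self]

set_option maxHeartbeats 1000000 in
lemma adE_Z (hq : q ≠ 0) (hq1 : q - q⁻¹ ≠ 0) : adE q (uZ q) = (-(q + q⁻¹)) • uX q := by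
  simp only [adE, uX, uZ, uY, mul_sub, sub_mul, mul_add, add_mul, smul_mul_assoc,
    mul_smul_comm, mul_assoc, cKE, cKF, cKiE hq, cKiF hq, cFE, cKKi, cKiK,
    hKE, hKF, hKiE hq, hKiF hq, hFE, hKKi, hKiK, smul_smul, mul_one, one_mul,
    smul_sub, smul_add]
  have hr : q * q⁻¹ = 1 := mul_inv_cancel₀ hq
  have hs : q ^ 2 * (q ^ 2)⁻¹ = 1 := mul_inv_cancel₀ (hq2 hq)
  have hd : (q - q⁻¹) * (q - q⁻¹)⁻¹ = 1 := mul_inv_cancel₀ hq1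
  generalize hD : (q - q⁻¹)⁻¹ = d at *
  generalize hS : (q ^ 2)⁻¹ = s at *
  generalize hR : q⁻¹ = r at *
  match_scalars
  · ring
  · linear_combination (-(q+r))*hd + (d*r^2)*hs + (-(s*d*(q*r+1)))*hr
  · ring

set_option maxHeartbeats 1000000 in
lemma adE_Y (hq : q ≠ 0) (hq1 : q - q⁻¹ ≠ 0) : adE q (uY q) = uZ q := by
  simp only [adE, adF, adK, adKi, uX, uZ, uY, mul_sub, sub_mul, mul_add, add_mul,
    smul_mul_assoc, mul_smul_comm, mul_assoc, cKE, cKF, cKiE hq, cKiF hq, cFE, cKKi, cKiK,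
    hKE, hKF, hKiE hq, hKiF hq, hFE, hKKi, hKiK, smul_smul, mul_one, one_mul,
    smul_sub, smul_add]
  have hr : q * q⁻¹ = 1 := mul_inv_cancel₀ hq
  have hs : q ^ 2 * (q ^ 2)⁻¹ = 1 := mul_inv_cancel₀ (hq2 hq)
  have hd : (q - q⁻¹) * (q - q⁻¹)⁻¹ = 1 := mul_inv_cancel₀ hq1
  generalize hD : (q - q⁻¹)⁻¹ = d at *
  generalize hS : (q ^ 2)⁻¹ = s at *
  generalize hR : q⁻¹ = r at *
  match_scalars
  all_goals (first
    | ring1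
    | linear_combination -hs
    | linear_combination d*hs
    | linear_combination -d*hs
    | linear_combination -s*hs
    | linear_combination s*hs
    | linear_combination (s-1)*hs
    | linear_combination (q^2*s+1)*(1-s)*hs
    | linear_combination (d+d*q^2)*hs
    | linear_combination (s*q*(1+s))*hd + (r*s - d*(1+s))*hs + (d*s*(1+s) - s^2*q)*hr)

set_option maxHeartbeats 1000000 in
lemma adF_X (hq : q ≠ 0) (hq1 : q - q⁻¹ ≠ 0) : adF q (uX q) = (-1 : ℂ) • uZ q := by
  simp only [adE, adF, adK, adKi, uX, uZ, uY, mul_sub, sub_mul, mul_add, add_mul,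
    smul_mul_assoc, mul_smul_comm, mul_assoc, cKE, cKF, cKiE hq, cKiF hq, cFE, cKKi, cKiK,
    hKE, hKF, hKiE hq, hKiF hq, hFE, hKKi, hKiK, smul_smul, mul_one, one_mul,
    smul_sub, smul_add]
  have hr : q * q⁻¹ = 1 := mul_inv_cancel₀ hq
  have hs : q ^ 2 * (q ^ 2)⁻¹ = 1 := mul_inv_cancel₀ (hq2 hq)
  have hd : (q - q⁻¹) * (q - q⁻¹)⁻¹ = 1 := mul_inv_cancel₀ hq1
  generalize hD : (q - q⁻¹)⁻¹ = d at *
  generalize hS : (q ^ 2)⁻¹ = s at *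
  generalize hR : q⁻¹ = r at *
  match_scalars
  all_goals (first
    | ring1
    | linear_combination -hs
    | linear_combination d*hs
    | linear_combination -d*hs
    | linear_combination -s*hs
    | linear_combination s*hs
    | linear_combination (s-1)*hs
    | linear_combination (q^2*s+1)*(1-s)*hs
    | linear_combination (d+d*q^2)*hs
    | linear_combination (s*q*(1+s))*hd + (r*s - d*(1+s))*hs + (d*s*(1+s) - s^2*q)*hr)

set_option maxHeartbeats 1000000 in
lemma adF_Y (hq : q ≠ 0) (hq1 : q - q⁻¹ ≠ 0) : adF q (uY q) = 0 := by
  simp only [adE, adF, adK, adKi, uX, uZ, uY, mul_sub, sub_mul, mul_add, add_mul,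
    smul_mul_assoc, mul_smul_comm, mul_assoc, cKE, cKF, cKiE hq, cKiF hq, cFE, cKKi, cKiK,
    hKE, hKF, hKiE hq, hKiF hq, hFE, hKKi, hKiK, smul_smul, mul_one, one_mul,
    smul_sub, smul_add]
  have hr : q * q⁻¹ = 1 := mul_inv_cancel₀ hq
  have hs : q ^ 2 * (q ^ 2)⁻¹ = 1 := mul_inv_cancel₀ (hq2 hq)
  have hd : (q - q⁻¹) * (q - q⁻¹)⁻¹ = 1 := mul_inv_cancel₀ hq1
  generalize hD : (q - q⁻¹)⁻¹ = d at *
  generalize hS : (q ^ 2)⁻¹ = s at *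
  generalize hR : q⁻¹ = r at *
  match_scalars
  all_goals (first
    | ring1
    | linear_combination -hs
    | linear_combination d*hs
    | linear_combination -d*hs
    | linear_combination -s*hs
    | linear_combination s*hs
    | linear_combination (s-1)*hs
    | linear_combination (q^2*s+1)*(1-s)*hs
    | linear_combination (d+d*q^2)*hs
    | linear_combination (s*q*(1+s))*hd + (r*s - d*(1+s))*hs + (d*s*(1+s) - s^2*q)*hr)

set_option maxHeartbeats 1000000 in
lemma adF_Z (hq : q ≠ 0) (hq1 : q - q⁻¹ ≠ 0) : adF q (uZ q) = (q + q⁻¹) • uY q := by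
  simp only [adE, adF, adK, adKi, uX, uZ, uY, mul_sub, sub_mul, mul_add, add_mul,
    smul_mul_assoc, mul_smul_comm, mul_assoc, cKE, cKF, cKiE hq, cKiF hq, cFE, cKKi, cKiK,
    hKE, hKF, hKiE hq, hKiF hq, hFE, hKKi, hKiK, smul_smul, mul_one, one_mul,
    smul_sub, smul_add]
  have hr : q * q⁻¹ = 1 := mul_inv_cancel₀ hq
  have hs : q ^ 2 * (q ^ 2)⁻¹ = 1 := mul_inv_cancel₀ (hq2 hq)
  have hd : (q - q⁻¹) * (q - q⁻¹)⁻¹ = 1 := mul_inv_cancel₀ hq1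
  generalize hD : (q - q⁻¹)⁻¹ = d at *
  generalize hS : (q ^ 2)⁻¹ = s at *
  generalize hR : q⁻¹ = r at *
  match_scalars
  all_goals (first
    | ring1
    | linear_combination -hs
    | linear_combination d*hs
    | linear_combination -d*hs
    | linear_combination -s*hs
    | linear_combination s*hs
    | linear_combination (s-1)*hs
    | linear_combination (q^2*s+1)*(1-s)*hs
    | linear_combination (d+d*q^2)*hs
    | linear_combination (s*q*(1+s))*hd + (r*s - d*(1+s))*hs + (d*s*(1+s) - s^2*q)*hr)

set_option maxHeartbeats 1000000 in
lemma adK_X (hq : q ≠ 0) (hq1 : q - q⁻¹ ≠ 0) : adK q (uX q) = (q ^ 2) • uX q := by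
  simp only [adE, adF, adK, adKi, uX, uZ, uY, mul_sub, sub_mul, mul_add, add_mul,
    smul_mul_assoc, mul_smul_comm, mul_assoc, cKE, cKF, cKiE hq, cKiF hq, cFE, cKKi, cKiK,
    hKE, hKF, hKiE hq, hKiF hq, hFE, hKKi, hKiK, smul_smul, mul_one, one_mul,
    smul_sub, smul_add]

set_option maxHeartbeats 1000000 in
lemma adK_Y (hq : q ≠ 0) (hq1 : q - q⁻¹ ≠ 0) : adK q (uY q) = ((q ^ 2)⁻¹) • uY q := by
  simp only [adE, adF, adK, adKi, uX, uZ, uY, mul_sub, sub_mul, mul_add, add_mul,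
    smul_mul_assoc, mul_smul_comm, mul_assoc, cKE, cKF, cKiE hq, cKiF hq, cFE, cKKi, cKiK,
    hKE, hKF, hKiE hq, hKiF hq, hFE, hKKi, hKiK, smul_smul, mul_one, one_mul,
    smul_sub, smul_add]

set_option maxHeartbeats 1000000 in
lemma adK_Z (hq : q ≠ 0) (hq1 : q - q⁻¹ ≠ 0) : adK q (uZ q) = uZ q := by
  simp only [adE, adF, adK, adKi, uX, uZ, uY, mul_sub, sub_mul, mul_add, add_mul,
    smul_mul_assoc, mul_smul_comm, mul_assoc, cKE, cKF, cKiE hq, cKiF hq, cFE, cKKi, cKiK,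
    hKE, hKF, hKiE hq, hKiF hq, hFE, hKKi, hKiK, smul_smul, mul_one, one_mul,
    smul_sub, smul_add]
  have hr : q * q⁻¹ = 1 := mul_inv_cancel₀ hq
  have hs : q ^ 2 * (q ^ 2)⁻¹ = 1 := mul_inv_cancel₀ (hq2 hq)
  have hd : (q - q⁻¹) * (q - q⁻¹)⁻¹ = 1 := mul_inv_cancel₀ hq1
  generalize hD : (q - q⁻¹)⁻¹ = d at *
  generalize hS : (q ^ 2)⁻¹ = s at *
  generalize hR : q⁻¹ = r at *
  match_scalars
  all_goals (first
    | ring1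
    | linear_combination -hs
    | linear_combination d*hs
    | linear_combination -d*hs
    | linear_combination -s*hs
    | linear_combination s*hs
    | linear_combination (s-1)*hs
    | linear_combination (q^2*s+1)*(1-s)*hs
    | linear_combination (d+d*q^2)*hs
    | linear_combination (s*q*(1+s))*hd + (r*s - d*(1+s))*hs + (d*s*(1+s) - s^2*q)*hr)

set_option maxHeartbeats 1000000 in
lemma adKi_X (hq : q ≠ 0) (hq1 : q - q⁻¹ ≠ 0) : adKi q (uX q) = ((q ^ 2)⁻¹) • uX q := by
  simp only [adE, adF, adK, adKi, uX, uZ, uY, mul_sub, sub_mul, mul_add, add_mul,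
    smul_mul_assoc, mul_smul_comm, mul_assoc, cKE, cKF, cKiE hq, cKiF hq, cFE, cKKi, cKiK,
    hKE, hKF, hKiE hq, hKiF hq, hFE, hKKi, hKiK, smul_smul, mul_one, one_mul,
    smul_sub, smul_add]

set_option maxHeartbeats 1000000 in
lemma adKi_Y (hq : q ≠ 0) (hq1 : q - q⁻¹ ≠ 0) : adKi q (uY q) = (q ^ 2) • uY q := by
  simp only [adE, adF, adK, adKi, uX, uZ, uY, mul_sub, sub_mul, mul_add, add_mul,
    smul_mul_assoc, mul_smul_comm, mul_assoc, cKE, cKF, cKiE hq, cKiF hq, cFE, cKKi, cKiK,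
    hKE, hKF, hKiE hq, hKiF hq, hFE, hKKi, hKiK, smul_smul, mul_one, one_mul,
    smul_sub, smul_add]
  have hr : q * q⁻¹ = 1 := mul_inv_cancel₀ hq
  have hs : q ^ 2 * (q ^ 2)⁻¹ = 1 := mul_inv_cancel₀ (hq2 hq)
  have hd : (q - q⁻¹) * (q - q⁻¹)⁻¹ = 1 := mul_inv_cancel₀ hq1
  generalize hD : (q - q⁻¹)⁻¹ = d at *
  generalize hS : (q ^ 2)⁻¹ = s at *
  generalize hR : q⁻¹ = r at *
  match_scalars
  all_goals (first
    | ring1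
    | linear_combination -hs
    | linear_combination d*hs
    | linear_combination -d*hs
    | linear_combination -s*hs
    | linear_combination s*hs
    | linear_combination (s-1)*hs
    | linear_combination (q^2*s+1)*(1-s)*hs
    | linear_combination (d+d*q^2)*hs
    | linear_combination (s*q*(1+s))*hd + (r*s - d*(1+s))*hs + (d*s*(1+s) - s^2*q)*hr)

set_option maxHeartbeats 1000000 in
lemma adKi_Z (hq : q ≠ 0) (hq1 : q - q⁻¹ ≠ 0) : adKi q (uZ q) = uZ q := by
  simp only [adE, adF, adK, adKi, uX, uZ, uY, mul_sub, sub_mul, mul_add, add_mul,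
    smul_mul_assoc, mul_smul_comm, mul_assoc, cKE, cKF, cKiE hq, cKiF hq, cFE, cKKi, cKiK,
    hKE, hKF, hKiE hq, hKiF hq, hFE, hKKi, hKiK, smul_smul, mul_one, one_mul,
    smul_sub, smul_add]
  have hr : q * q⁻¹ = 1 := mul_inv_cancel₀ hq
  have hs : q ^ 2 * (q ^ 2)⁻¹ = 1 := mul_inv_cancel₀ (hq2 hq)
  have hd : (q - q⁻¹) * (q - q⁻¹)⁻¹ = 1 := mul_inv_cancel₀ hq1
  generalize hD : (q - q⁻¹)⁻¹ = d at *
  generalize hS : (q ^ 2)⁻¹ = s at *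
  generalize hR : q⁻¹ = r at *
  match_scalars
  all_goals (first
    | ring1
    | linear_combination -hs
    | linear_combination d*hs
    | linear_combination -d*hs
    | linear_combination -s*hs
    | linear_combination s*hs
    | linear_combination (s-1)*hs
    | linear_combination (q^2*s+1)*(1-s)*hs
    | linear_combination (d+d*q^2)*hs
    | linear_combination (s*q*(1+s))*hd + (r*s - d*(1+s))*hs + (d*s*(1+s) - s^2*q)*hr)


-- linearity of the ad maps
lemma adE_add (x y : Uq q) : adE q (x + y) = adE q x + adE q y := by
  simp only [adE, mul_add, add_mul]; abel
lemma adE_smul (c : ℂ) (x : Uq q) : adE q (c • x) = c • adE q x := by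
  simp only [adE, mul_smul_comm, smul_mul_assoc, smul_sub]
lemma adF_add (x y : Uq q) : adF q (x + y) = adF q x + adF q y := by
  simp only [adF, mul_add, add_mul]; abel
lemma adF_smul (c : ℂ) (x : Uq q) : adF q (c • x) = c • adF q x := by
  simp only [adF, mul_smul_comm, smul_mul_assoc, smul_sub]
lemma adK_add (x y : Uq q) : adK q (x + y) = adK q x + adK q y := by
  simp only [adK, mul_add, add_mul]
lemma adK_smul (c : ℂ) (x : Uq q) : adK q (c • x) = c • adK q x := by
  simp only [adK, mul_smul_comm, smul_mul_assoc]
lemma adKi_add (x y : Uq q) : adKi q (x + y) = adKi q x + adKi q y := by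
  simp only [adKi, mul_add, add_mul]
lemma adKi_smul (c : ℂ) (x : Uq q) : adKi q (c • x) = c • adKi q x := by
  simp only [adKi, mul_smul_comm, smul_mul_assoc]
lemma adE_zero : adE q 0 = 0 := by simp [adE]
lemma adF_zero : adF q 0 = 0 := by simp [adF]
lemma adK_zero : adK q 0 = 0 := by simp [adK]
lemma adKi_zero : adKi q 0 = 0 := by simp [adKi]

-- the two-dimensional representation
def repGen (q : ℂ) : Fin 4 → Matrix (Fin 2) (Fin 2) ℂ :=
  ![!![0,1;0,0], !![0,0;1,0], !![q,0;0,q⁻¹], !![q⁻¹,0;0,q]]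

lemma repRel (hq : q ≠ 0) (hq1 : q - q⁻¹ ≠ 0) :
    ∀ ⦃a b⦄, UqRel q a b →
      (FreeAlgebra.lift ℂ (repGen q)) a = (FreeAlgebra.lift ℂ (repGen q)) b := by
  have h3 : (-q + q ^ 3 : ℂ) ≠ 0 := by
    have h := mul_ne_zero (pow_ne_zero 2 hq) hq1
    intro h0; apply h
    field_simp
    linear_combination h0
  have h4 : (-1 + q ^ 2 : ℂ) ≠ 0 := by
    intro h0; apply h3
    linear_combination q * h0
  intro a b r
  induction r <;>
    simp only [map_mul, map_smul, map_sub, map_one, lift_ι_apply] <;>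
    ext i j <;>
    fin_cases i <;> fin_cases j <;>
    simp [repGen, Matrix.mul_apply, Fin.sum_univ_succ, Matrix.one_apply] <;>
    field_simp <;>
    (first
      | ring1
      | linear_combination -(mul_inv_cancel₀ h3)
      | linear_combination (mul_inv_cancel₀ h3)
      | linear_combination -(mul_inv_cancel₀ h3) - (mul_inv_cancel₀ h4)
      | linear_combination -(mul_inv_cancel₀ h3) + (mul_inv_cancel₀ h4)
      | linear_combination (mul_inv_cancel₀ h4)
      | linear_combination -(mul_inv_cancel₀ h4))

def repA (q : ℂ) (hq : q ≠ 0) (hq1 : q - q⁻¹ ≠ 0) :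
    Uq q →ₐ[ℂ] Matrix (Fin 2) (Fin 2) ℂ :=
  RingQuot.liftAlgHom ℂ ⟨FreeAlgebra.lift ℂ (repGen q), repRel hq hq1⟩

lemma repA_E (hq : q ≠ 0) (hq1 : q - q⁻¹ ≠ 0) :
    repA q hq hq1 (uE q) = !![0,1;0,0] := by
  rw [uE, repA, RingQuot.liftAlgHom_mkAlgHom_apply, lift_ι_apply]; rfl

lemma repA_F (hq : q ≠ 0) (hq1 : q - q⁻¹ ≠ 0) :
    repA q hq hq1 (uF q) = !![0,0;1,0] := by
  rw [uF, repA, RingQuot.liftAlgHom_mkAlgHom_apply, lift_ι_apply]; rfl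

lemma repA_K (hq : q ≠ 0) (hq1 : q - q⁻¹ ≠ 0) :
    repA q hq hq1 (uK q) = !![q,0;0,q⁻¹] := by
  rw [uK, repA, RingQuot.liftAlgHom_mkAlgHom_apply, lift_ι_apply]; rfl

lemma repA_X (hq : q ≠ 0) (hq1 : q - q⁻¹ ≠ 0) :
    repA q hq hq1 (uX q) = !![0,1;0,0] := repA_E hq hq1

lemma repA_Z (hq : q ≠ 0) (hq1 : q - q⁻¹ ≠ 0) :
    repA q hq hq1 (uZ q) = !![(q^2)⁻¹,0;0,-1] := by
  rw [uZ, map_sub, map_smul, map_mul, map_mul, repA_E hq hq1, repA_F hq hq1]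
  ext i j
  fin_cases i <;> fin_cases j <;>
    simp [Matrix.mul_apply, Fin.sum_univ_succ]

lemma repA_Y (hq : q ≠ 0) (hq1 : q - q⁻¹ ≠ 0) :
    repA q hq hq1 (uY q) = !![0,0;q⁻¹,0] := by
  rw [uY, map_mul, repA_K hq hq1, repA_F hq hq1]
  ext i j
  fin_cases i <;> fin_cases j <;>
    simp [Matrix.mul_apply, Fin.sum_univ_succ]

lemma li_XZY (hq : q ≠ 0) (hq1 : q - q⁻¹ ≠ 0) :
    LinearIndependent ℂ ![uX q, uZ q, uY q] := by
  apply LinearIndependent.of_comp (repA q hq hq1).toLinearMap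
  have hcomp : ((repA q hq hq1).toLinearMap ∘ ![uX q, uZ q, uY q]) =
      ![!![0,1;0,0], !![(q^2)⁻¹,0;0,-1], !![0,0;q⁻¹,0]] := by
    funext i
    fin_cases i <;>
      simp [repA_X hq hq1, repA_Z hq hq1, repA_Y hq hq1]
  rw [hcomp, Fintype.linearIndependent_iff]
  intro g hg
  have h01 := congrFun (congrFun hg 0) 1
  have h11 := congrFun (congrFun hg 1) 1
  have h10 := congrFun (congrFun hg 1) 0
  simp [Fin.sum_univ_three] at h01 h11 h10
  have hg2 : g 2 = 0 := by
    rcases h10 with h | h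
    · exact h
    · exact absurd h hq
  intro i
  fin_cases i
  · exact h01
  · simpa using h11
  · exact hg2

lemma span_set_eq : ({uX q, uZ q, uY q} : Set (Uq q)) = Set.range ![uX q, uZ q, uY q] := by
  simp only [Matrix.range_cons, Matrix.range_empty, Set.union_empty]
  ext x
  simp
  tauto

/-- In U_q(sl_2), the elements X = E, Z = q⁻²EF - FE, Y = KF span a
3-dimensional subspace which is closed under the left adjoint action
ad_x(y) = Σ x_{(1)} y S(x_{(2)}) (it suffices that it is closed under the adjoint
action of each of the generators E, F, K, K⁻¹, since ad is multiplicative). -/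
theorem slq2_three_dimensional_ad_closed
    (q : ℂ) (hq : q ≠ 0) (hroot : ∀ n : ℕ, 0 < n → q ^ n ≠ 1) :
    Module.finrank ℂ
      (Submodule.span ℂ ({uX q, uZ q, uY q} : Set (Uq q))) = 3 ∧
    ∀ y ∈ Submodule.span ℂ ({uX q, uZ q, uY q} : Set (Uq q)),
      adE q y ∈ Submodule.span ℂ ({uX q, uZ q, uY q} : Set (Uq q)) ∧
      adF q y ∈ Submodule.span ℂ ({uX q, uZ q, uY q} : Set (Uq q)) ∧
      adK q y ∈ Submodule.span ℂ ({uX q, uZ q, uY q} : Set (Uq q)) ∧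
      adKi q y ∈ Submodule.span ℂ ({uX q, uZ q, uY q} : Set (Uq q)) := by
  have hq1 : q - q⁻¹ ≠ 0 := by
    intro h
    apply hroot 2 (by norm_num)
    field_simp at h
    rw [sq]
    linear_combination h
  set S := Submodule.span ℂ ({uX q, uZ q, uY q} : Set (Uq q)) with hS
  have hX : uX q ∈ S := Submodule.subset_span (by simp)
  have hZ : uZ q ∈ S := Submodule.subset_span (by simp)
  have hY : uY q ∈ S := Submodule.subset_span (by simp)
  constructor
  · rw [hS, span_set_eq, finrank_span_eq_card (li_XZY hq hq1)]
    simp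
  · intro y hy
    induction hy using Submodule.span_induction with
    | mem x hx =>
      rcases hx with h | h | h
      · subst h
        refine ⟨?_, ?_, ?_, ?_⟩
        · rw [adE_X]; exact zero_mem S
        · rw [adF_X hq hq1]; exact Submodule.smul_mem S _ hZ
        · rw [adK_X hq hq1]; exact Submodule.smul_mem S _ hX
        · rw [adKi_X hq hq1]; exact Submodule.smul_mem S _ hX
      · subst h
        refine ⟨?_, ?_, ?_, ?_⟩
        · rw [adE_Z hq hq1]; exact Submodule.smul_mem S _ hX
        · rw [adF_Z hq hq1]; exact Submodule.smul_mem S _ hY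
        · rw [adK_Z hq hq1]; exact hZ
        · rw [adKi_Z hq hq1]; exact hZ
      · subst h
        refine ⟨?_, ?_, ?_, ?_⟩
        · rw [adE_Y hq hq1]; exact hZ
        · rw [adF_Y hq hq1]; exact zero_mem S
        · rw [adK_Y hq hq1]; exact Submodule.smul_mem S _ hY
        · rw [adKi_Y hq hq1]; exact Submodule.smul_mem S _ hY
    | zero =>
      exact ⟨by rw [adE_zero]; exact zero_mem S, by rw [adF_zero]; exact zero_mem S,
        by rw [adK_zero]; exact zero_mem S, by rw [adKi_zero]; exact zero_mem S⟩
    | add x y _ _ ihx ihy =>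
      exact ⟨by rw [adE_add]; exact add_mem ihx.1 ihy.1,
        by rw [adF_add]; exact add_mem ihx.2.1 ihy.2.1,
        by rw [adK_add]; exact add_mem ihx.2.2.1 ihy.2.2.1,
        by rw [adKi_add]; exact add_mem ihx.2.2.2 ihy.2.2.2⟩
    | smul c x _ ih =>
      exact ⟨by rw [adE_smul]; exact Submodule.smul_mem S c ih.1,
        by rw [adF_smul]; exact Submodule.smul_mem S c ih.2.1,
        by rw [adK_smul]; exact Submodule.smul_mem S c ih.2.2.1,
        by rw [adKi_smul]; exact Submodule.smul_mem S c ih.2.2.2⟩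

end
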